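/- arXiv:1304.1207 — 8 statements merged into one kernel-verified Lean document; each statement's English description precedes it below -/
import Mathlib

section
/- Let 𝒬 = (Q_ℓ)_{ℓ=1}^L be a partition of the character group Ĝ of a finite abelian group G and let 𝒫 = (P_m)_{m=1}^M = 𝒬̂ be its dual partition of G (identifying the double character group with G via g(χ) = χ(g)). Let K ∈ ℂ^{M×L} be the Krawtchouk matrix of (𝒬, 𝒫), i.e., K_{m,ℓ} = Σ_{χ∈Q_ℓ} χ(g) for any (every) g ∈ P_m. Then for every subgroup C ≤ G, setting A_m = |C ∩ P_m| and B_ℓ = |C^⊥ ∩ Q_ℓ|, the MacWilliams identity B_ℓ = (1/|C|) · Σ_{m=1}^M A_m K_{m,ℓ} holds for all ℓ = 1, …, L. -/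
open Finset
open scoped Classical

variable {G : Type*} [AddCommGroup G] [Fintype G]

/-- The sum `Σ_{g ∈ P_c} χ(g)` of the character `χ` over the block of the partition
(setoid) `P` of `G` indexed by `c`. -/
noncomputable def blockSum (P : Setoid G) (χ : AddChar G ℂ) (c : Quotient P) : ℂ :=
  ∑ g : G, if Quotient.mk P g = c then χ g else 0

/-- The dual partition `P̂` of the character group `Ĝ`:  `χ ∼ χ'` iff the sums of `χ` and of
`χ'` over each block of `P` agree. -/
noncomputable def dualSetoid (P : Setoid G) : Setoid (AddChar G ℂ) :=
  Setoid.ker (blockSum P)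

/-- The sum `Σ_{χ ∈ Q_c} χ(g)` over the block of the dual partition indexed by `c`. -/
noncomputable def dualBlockSum (P : Setoid G) (g : G) (c : Quotient (dualSetoid P)) : ℂ :=
  ∑ᶠ χ : AddChar G ℂ, if Quotient.mk (dualSetoid P) χ = c then χ g else 0

/-- The bidual partition `P̂̂`, viewed as a partition of `G` by identifying the double
character group with `G` via `g(χ) = χ(g)`. -/
noncomputable def bidualSetoid (P : Setoid G) : Setoid G :=
  Setoid.ker (dualBlockSum P)

/-- The dual (on `G`) of a partition `Q` of the character group `Ĝ`, identifying the double
character group with `G` via `g(χ) = χ(g)`:  `g ∼ g'` iff the sums over each block of `Q`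
of the evaluations at `g` and at `g'` agree. -/
noncomputable def codualSetoid (Q : Setoid (AddChar G ℂ)) : Setoid G :=
  Setoid.ker fun g (c : Quotient Q) =>
    ∑ᶠ χ : AddChar G ℂ, if Quotient.mk Q χ = c then χ g else 0

/-- **MacWilliams identity for partition enumerators.**  If `Q` is a partition of `Ĝ` and
`P = Q̂` is its dual partition of `G`, `K` is the Krawtchouk matrix of `(Q, P)`, and `C ≤ G`
is a code with dual code `C^⊥ = {χ : χ(h) = 1 ∀ h ∈ C}`, then with `A_m = |C ∩ P_m|` and
`B_ℓ = |C^⊥ ∩ Q_ℓ|` one has `B_ℓ = |C|⁻¹ Σ_m A_m K_{m,ℓ}`. -/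
theorem macwilliams_partition_enumerator
    (Q : Setoid (AddChar G ℂ)) (P : Setoid G) (hP : P = codualSetoid Q)
    (K : Quotient P → Quotient Q → ℂ)
    (hK : ∀ (g : G) (ℓ : Quotient Q),
      K (Quotient.mk P g) ℓ = ∑ᶠ χ : AddChar G ℂ, if Quotient.mk Q χ = ℓ then χ g else 0)
    (C : AddSubgroup G) (ℓ : Quotient Q) :
    (Nat.card {χ : AddChar G ℂ // (∀ h ∈ C, χ h = 1) ∧ Quotient.mk Q χ = ℓ} : ℂ) =
      (Nat.card C : ℂ)⁻¹ *
        ∑ᶠ m : Quotient P,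
          (Nat.card {g : G // g ∈ C ∧ Quotient.mk P g = m} : ℂ) * K m ℓ := by
  classical
  haveI : Fintype (AddChar G ℂ) := Fintype.ofFinite _
  have hCne : (Nat.card C : ℂ) ≠ 0 := by
    simp [Nat.card_eq_fintype_card, Fintype.card_ne_zero]
  -- character sum over the code C
  have hsum : ∀ χ : AddChar G ℂ,
      (∑ g : G, if g ∈ C then χ g else 0)
        = if ∀ h ∈ C, χ h = 1 then (Nat.card C : ℂ) else 0 := by
    intro χ
    have h1 : (∑ g : G, if g ∈ C then χ g else 0) = ∑ h : C, χ (h : G) := by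
      rw [← Finset.sum_filter]
      exact Finset.sum_subtype (Finset.univ.filter (· ∈ C)) (fun x => by simp) χ
    have h2 : ∑ h : C, χ (h : G) = ∑ h : C, (χ.compAddMonoidHom C.subtype) h := rfl
    rw [h1, h2, AddChar.sum_eq_ite]
    have hiff : (χ.compAddMonoidHom C.subtype = 0) ↔ (∀ h ∈ C, χ h = 1) := by
      rw [AddChar.eq_zero_iff]
      constructor
      · intro h x hx; exact h ⟨x, hx⟩
      · intro h x; exact h x x.2
    rw [if_congr hiff rfl rfl, Nat.card_eq_fintype_card]
  -- expressing the cardinalities as sums of indicator functions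
  have hcard : ∀ (p : AddChar G ℂ → Prop),
      (Nat.card {χ : AddChar G ℂ // p χ} : ℂ) = ∑ χ : AddChar G ℂ, if p χ then 1 else 0 := by
    intro p
    rw [Finset.sum_boole, Nat.card_eq_fintype_card, Fintype.card_subtype]
  have hcardG : ∀ (p : G → Prop),
      (Nat.card {g : G // p g} : ℂ) = ∑ g : G, if p g then 1 else 0 := by
    intro p
    rw [Finset.sum_boole, Nat.card_eq_fintype_card, Fintype.card_subtype]
  -- the main computation
  have main : ∑ᶠ m : Quotient P,
      (Nat.card {g : G // g ∈ C ∧ Quotient.mk P g = m} : ℂ) * K m ℓ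
      = (Nat.card C : ℂ) *
        (Nat.card {χ : AddChar G ℂ // (∀ h ∈ C, χ h = 1) ∧ Quotient.mk Q χ = ℓ} : ℂ) := by
    rw [finsum_eq_sum_of_fintype]
    calc ∑ m : Quotient P,
        (Nat.card {g : G // g ∈ C ∧ Quotient.mk P g = m} : ℂ) * K m ℓ
        = ∑ m : Quotient P, ∑ g : G,
            (if g ∈ C ∧ Quotient.mk P g = m then K m ℓ else 0) := by
          refine Finset.sum_congr rfl fun m _ => ?_
          rw [hcardG, Finset.sum_mul]
          refine Finset.sum_congr rfl fun g _ => ?_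
          by_cases h : g ∈ C ∧ Quotient.mk P g = m <;> simp [h]
      _ = ∑ g : G, ∑ m : Quotient P,
            (if g ∈ C ∧ Quotient.mk P g = m then K m ℓ else 0) := Finset.sum_comm
      _ = ∑ g : G, (if g ∈ C then K (Quotient.mk P g) ℓ else 0) := by
          refine Finset.sum_congr rfl fun g _ => ?_
          by_cases hg : g ∈ C
          · simp only [hg, true_and, if_true, Finset.sum_ite_eq, Finset.mem_univ]
          · simp [hg]
      _ = ∑ g : G, (if g ∈ C then
            ∑ χ : AddChar G ℂ, (if Quotient.mk Q χ = ℓ then χ g else 0) else 0) := by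
          refine Finset.sum_congr rfl fun g _ => ?_
          rw [hK, finsum_eq_sum_of_fintype]
      _ = ∑ g : G, ∑ χ : AddChar G ℂ,
            (if g ∈ C ∧ Quotient.mk Q χ = ℓ then χ g else 0) := by
          refine Finset.sum_congr rfl fun g _ => ?_
          by_cases hg : g ∈ C <;> simp [hg]
      _ = ∑ χ : AddChar G ℂ, ∑ g : G,
            (if g ∈ C ∧ Quotient.mk Q χ = ℓ then χ g else 0) := Finset.sum_comm
      _ = ∑ χ : AddChar G ℂ, (if Quotient.mk Q χ = ℓ then
            ∑ g : G, (if g ∈ C then χ g else 0) else 0) := by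
          refine Finset.sum_congr rfl fun χ _ => ?_
          by_cases hχ : Quotient.mk Q χ = ℓ <;> simp [hχ, and_comm]
      _ = ∑ χ : AddChar G ℂ,
            (if (∀ h ∈ C, χ h = 1) ∧ Quotient.mk Q χ = ℓ then (Nat.card C : ℂ) else 0) := by
          refine Finset.sum_congr rfl fun χ _ => ?_
          rw [hsum]
          by_cases hχ : Quotient.mk Q χ = ℓ <;> by_cases hC : ∀ h ∈ C, χ h = 1 <;>
            simp [hχ, hC]
      _ = (Nat.card C : ℂ) *
            (Nat.card {χ : AddChar G ℂ // (∀ h ∈ C, χ h = 1) ∧ Quotient.mk Q χ = ℓ} : ℂ) := by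
          rw [hcard, Finset.mul_sum]
          refine Finset.sum_congr rfl fun χ _ => ?_
          by_cases h : (∀ h ∈ C, χ h = 1) ∧ Quotient.mk Q χ = ℓ <;> simp [h]
  rw [main, inv_mul_cancel_left₀ hCne]
end

section
/- For every partition 𝒫 of a finite abelian group G, the number of blocks of 𝒫 is at most the number of blocks of its dual partition 𝒫̂ of the character group Ĝ, i.e., |𝒫| ≤ |𝒫̂|. -/
open Finset
open scoped Classical

variable {G : Type*} [AddCommGroup G] [Fintype G]

/-- If all "Fourier coefficients" of `f` vanish, then `f = 0`. -/
lemma auxFourierZero (f : G → ℂ) (h : ∀ χ : AddChar G ℂ, ∑ g : G, f g * χ g = 0) : f = 0 := by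
  classical
  let φ : (G → ℂ) →ₗ[ℂ] ℂ :=
    { toFun := fun h => ∑ g : G, f g * h g
      map_add' := by intro x y; simp [mul_add, Finset.sum_add_distrib]
      map_smul' := by intro m x; simp [Finset.mul_sum, mul_left_comm] }
  have hφ : φ = 0 := by
    apply (AddChar.complexBasis G).ext
    intro ψ
    simpa [φ, AddChar.complexBasis_apply] using h ψ
  funext g
  have := congrArg (fun ψ => ψ (Pi.single g 1)) hφ
  simpa [φ, Pi.single_apply, mul_comm] using this

/-- The number of blocks of a partition `P` of `G` is at most the number of blocks of its
dual partition `P̂` of the character group `Ĝ`. -/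
theorem card_blocks_le_card_blocks_dual (P : Setoid G) :
    Nat.card (Quotient P) ≤ Nat.card (Quotient (dualSetoid P)) := by
  classical
  have : Fintype (Quotient (dualSetoid P)) := Fintype.ofFinite _
  have : Fintype (Quotient P) := Quotient.fintype _
  set W : Quotient P → (Quotient (dualSetoid P) → ℂ) := fun c =>
    Quotient.lift (fun χ => blockSum P χ c) (fun χ χ' h => congrFun h c) with hWdef
  have hW : LinearIndependent ℂ W := by
    rw [Fintype.linearIndependent_iff]
    intro a ha c
    have hf : (fun g : G => a (Quotient.mk P g)) = 0 := by
      apply auxFourierZero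
      intro χ
      have h1 := congrFun ha (Quotient.mk (dualSetoid P) χ)
      simp only [Finset.sum_apply, Pi.smul_apply, Pi.zero_apply, smul_eq_mul, hWdef,
        Quotient.lift_mk] at h1
      calc ∑ g : G, a (Quotient.mk P g) * χ g
          = ∑ g : G, ∑ c : Quotient P, if Quotient.mk P g = c then a c * χ g else 0 := by
            simp [Finset.sum_ite_eq]
        _ = ∑ c : Quotient P, a c * blockSum P χ c := by
            rw [Finset.sum_comm]
            simp [blockSum, Finset.mul_sum, mul_ite]
        _ = 0 := h1
    obtain ⟨g, rfl⟩ := Quotient.exists_rep c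
    exact congrFun hf g
  calc Nat.card (Quotient P) = Fintype.card (Quotient P) := Nat.card_eq_fintype_card
    _ ≤ Module.finrank ℂ (Quotient (dualSetoid P) → ℂ) := hW.fintype_card_le_finrank
    _ = Fintype.card (Quotient (dualSetoid P)) := Module.finrank_fintype_fun_eq_card _
    _ = Nat.card (Quotient (dualSetoid P)) := Nat.card_eq_fintype_card.symm
end

section
/- For every partition 𝒫 of a finite abelian group G, the bidual partition 𝒫̂̂ (the dual of the dual partition 𝒫̂, viewed as a partition of G by identifying the double character group with G via g(χ) = χ(g)) is finer than 𝒫, i.e., 𝒫̂̂ ≤ 𝒫. -/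
open Finset
open scoped Classical

variable {G : Type*} [AddCommGroup G] [Fintype G]

private lemma key_identity (P : Setoid G) (g x : G) :
    ∑ c : Quotient (dualSetoid P),
        (starRingEnd ℂ) (blockSum P (Quotient.out c) (Quotient.mk P g)) * dualBlockSum P x c
      = if Quotient.mk P x = Quotient.mk P g then (Fintype.card G : ℂ) else 0 := by
  have hout : ∀ χ : AddChar G ℂ,
      blockSum P (Quotient.out (Quotient.mk (dualSetoid P) χ)) = blockSum P χ := by
    intro χ
    have : (dualSetoid P).r (Quotient.out (Quotient.mk (dualSetoid P) χ)) χ :=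
      Quotient.mk_out (s := dualSetoid P) χ
    exact this
  calc
    ∑ c : Quotient (dualSetoid P),
        (starRingEnd ℂ) (blockSum P (Quotient.out c) (Quotient.mk P g)) * dualBlockSum P x c
      = ∑ c : Quotient (dualSetoid P), ∑ χ : AddChar G ℂ,
          if Quotient.mk (dualSetoid P) χ = c then
            (starRingEnd ℂ) (blockSum P (Quotient.out c) (Quotient.mk P g)) * χ x else 0 := by
        refine Finset.sum_congr rfl fun c _ => ?_
        rw [dualBlockSum, finsum_eq_sum_of_fintype, Finset.mul_sum]
        exact Finset.sum_congr rfl fun χ _ => by split <;> simp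
    _ = ∑ χ : AddChar G ℂ, ∑ c : Quotient (dualSetoid P),
          if Quotient.mk (dualSetoid P) χ = c then
            (starRingEnd ℂ) (blockSum P (Quotient.out c) (Quotient.mk P g)) * χ x else 0 :=
        Finset.sum_comm
    _ = ∑ χ : AddChar G ℂ,
          (starRingEnd ℂ) (blockSum P χ (Quotient.mk P g)) * χ x := by
        refine Finset.sum_congr rfl fun χ _ => ?_
        rw [Finset.sum_ite_eq (Finset.univ) (Quotient.mk (dualSetoid P) χ)]
        simp [hout χ]
    _ = ∑ χ : AddChar G ℂ, ∑ h : G,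
          if Quotient.mk P h = Quotient.mk P g then χ (x - h) else 0 := by
        refine Finset.sum_congr rfl fun χ _ => ?_
        rw [blockSum, map_sum, Finset.sum_mul]
        refine Finset.sum_congr rfl fun h _ => ?_
        split
        · rw [← AddChar.map_neg_eq_conj, ← AddChar.map_add_eq_mul, neg_add_eq_sub]
        · simp
    _ = ∑ h : G, if Quotient.mk P h = Quotient.mk P g then
          ∑ χ : AddChar G ℂ, χ (x - h) else 0 := by
        rw [Finset.sum_comm]
        refine Finset.sum_congr rfl fun h _ => ?_
        split <;> simp
    _ = ∑ h : G, if Quotient.mk P h = Quotient.mk P g then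
          (if x - h = 0 then (Fintype.card G : ℂ) else 0) else 0 := by
        refine Finset.sum_congr rfl fun h _ => ?_
        split
        · exact AddChar.sum_apply_eq_ite _
        · rfl
    _ = if Quotient.mk P x = Quotient.mk P g then (Fintype.card G : ℂ) else 0 := by
        have : ∀ h : G, (if Quotient.mk P h = Quotient.mk P g then
              (if x - h = 0 then (Fintype.card G : ℂ) else 0) else 0)
            = if h = x then (if Quotient.mk P x = Quotient.mk P g then
              (Fintype.card G : ℂ) else 0) else 0 := by
          intro h
          rcases eq_or_ne h x with rfl | hx
          · simp [sub_eq_zero]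
          · simp [hx, sub_eq_zero, Ne.symm hx]
        rw [Finset.sum_congr rfl fun h _ => this h, Finset.sum_ite_eq' Finset.univ x]
        simp

/-- The bidual partition `P̂̂` is finer than `P`:  any two elements of `G` that are
equivalent for `P̂̂` are equivalent for `P` (i.e. every block of `P̂̂` is contained in a
block of `P`). -/
theorem bidual_finer (P : Setoid G) : bidualSetoid P ≤ P := by
  intro g g' h
  have hd : dualBlockSum P g = dualBlockSum P g' := h
  have h1 := key_identity P g g
  have h2 := key_identity P g g'
  rw [← hd] at h2
  rw [h1, if_pos rfl] at h2
  have hcard : (Fintype.card G : ℂ) ≠ 0 := Nat.cast_ne_zero.2 Fintype.card_ne_zero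
  by_contra hne
  rw [if_neg] at h2
  · exact hcard h2
  · exact fun hq => hne (Quotient.eq'.mp hq.symm)
end

section
/- Let 𝒫 and 𝒬 be Fourier-reflexive partitions of a finite abelian group G. Then the join 𝒫 ∨ 𝒬 (the finest partition coarser than both 𝒫 and 𝒬) is Fourier-reflexive, and its dual partition satisfies (𝒫 ∨ 𝒬)̂ = 𝒫̂ ∨ 𝒬̂. -/
open Finset
open scoped Classical

variable {G : Type*} [AddCommGroup G] [Fintype G]

/- auxiliary -/

noncomputable def charSum (S : Setoid (AddChar G ℂ)) (g : G) (c : Quotient S) : ℂ :=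
  ∑ᶠ χ : AddChar G ℂ, if Quotient.mk S χ = c then χ g else 0

noncomputable def coDualSetoid (S : Setoid (AddChar G ℂ)) : Setoid G :=
  Setoid.ker (charSum S)

lemma bidual_eq (P : Setoid G) : bidualSetoid P = coDualSetoid (dualSetoid P) := rfl

lemma charSum_eq (S : Setoid (AddChar G ℂ)) (g : G) (c : Quotient S) :
    charSum S g c = ∑ χ : AddChar G ℂ, if Quotient.mk S χ = c then χ g else 0 :=
  finsum_eq_sum_of_fintype _

lemma sum_fiber {α : Type*} [Fintype α] (S : Setoid α) (F : Quotient S → α → ℂ) :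
    ∑ c : Quotient S, ∑ a : α, (if Quotient.mk S a = c then F c a else 0)
      = ∑ a : α, F (Quotient.mk S a) a := by
  rw [Finset.sum_comm]
  simp [Finset.sum_ite_eq]

lemma blockSum_coarser {P P' : Setoid G} (h : P ≤ P') (ψ : AddChar G ℂ) (c' : Quotient P') :
    blockSum P' ψ c' = ∑ m : Quotient P,
      if Quotient.lift (Quotient.mk P') (fun _ _ hab => Quot.sound (Setoid.le_def.mp h hab)) m = c'
        then blockSum P ψ m else 0 := by
  set f : Quotient P → Quotient P' :=
    Quotient.lift (Quotient.mk P') (fun _ _ hab => Quot.sound (Setoid.le_def.mp h hab)) with hf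
  have step1 : ∀ m : Quotient P, (if f m = c' then blockSum P ψ m else 0)
      = ∑ g : G, if Quotient.mk P g = m then (if f m = c' then ψ g else 0) else 0 := by
    intro m
    split_ifs with hm
    · rw [blockSum]
    · simp
  calc blockSum P' ψ c' = ∑ g : G, if f (Quotient.mk P g) = c' then ψ g else 0 := rfl
    _ = ∑ m : Quotient P, ∑ g : G,
          if Quotient.mk P g = m then (if f m = c' then ψ g else 0) else 0 :=
        (sum_fiber P fun m g => if f m = c' then ψ g else 0).symm
    _ = _ := by exact (Finset.sum_congr rfl fun m _ => (step1 m).symm)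

lemma dual_mono {P P' : Setoid G} (h : P ≤ P') : dualSetoid P ≤ dualSetoid P' := by
  rw [Setoid.le_def]
  intro χ χ' hχ
  have hχ' : blockSum P χ = blockSum P χ' := hχ
  show blockSum P' χ = blockSum P' χ'
  funext c'
  rw [blockSum_coarser h, blockSum_coarser h, hχ']

lemma charSum_coarser {S S' : Setoid (AddChar G ℂ)} (h : S ≤ S') (g : G) (c' : Quotient S') :
    charSum S' g c' = ∑ m : Quotient S,
      if Quotient.lift (Quotient.mk S') (fun _ _ hab => Quot.sound (Setoid.le_def.mp h hab)) m = c'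
        then charSum S g m else 0 := by
  set f : Quotient S → Quotient S' :=
    Quotient.lift (Quotient.mk S') (fun _ _ hab => Quot.sound (Setoid.le_def.mp h hab)) with hf
  have step1 : ∀ m : Quotient S, (if f m = c' then charSum S g m else 0)
      = ∑ χ : AddChar G ℂ, if Quotient.mk S χ = m then (if f m = c' then χ g else 0) else 0 := by
    intro m
    split_ifs with hm
    · rw [charSum_eq]
    · simp
  calc charSum S' g c' = ∑ χ : AddChar G ℂ, if f (Quotient.mk S χ) = c' then χ g else 0 :=
        charSum_eq S' g c'
    _ = ∑ m : Quotient S, ∑ χ : AddChar G ℂ,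
          if Quotient.mk S χ = m then (if f m = c' then χ g else 0) else 0 :=
        (sum_fiber S fun m χ => if f m = c' then χ g else 0).symm
    _ = _ := by exact (Finset.sum_congr rfl fun m _ => (step1 m).symm)

lemma coDual_mono {S S' : Setoid (AddChar G ℂ)} (h : S ≤ S') :
    coDualSetoid S ≤ coDualSetoid S' := by
  rw [Setoid.le_def]
  intro g g' hg
  have hg' : charSum S g = charSum S g' := hg
  show charSum S' g = charSum S' g'
  funext c'
  rw [charSum_coarser h, charSum_coarser h, hg']

lemma key1 (P : Setoid G) (x : G) (m : Quotient P) :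
    ∑ c : Quotient (dualSetoid P),
        (Quotient.lift (blockSum P) (fun _ _ h => h) c) m
          * (starRingEnd ℂ) (dualBlockSum P x c)
      = if Quotient.mk P x = m then (Fintype.card G : ℂ) else 0 := by
  set BS : Quotient (dualSetoid P) → Quotient P → ℂ :=
    Quotient.lift (blockSum P) (fun _ _ h => h) with hBS
  have hconj : ∀ c, (starRingEnd ℂ) (dualBlockSum P x c)
      = ∑ χ : AddChar G ℂ, if Quotient.mk (dualSetoid P) χ = c then χ (-x) else 0 := by
    intro c
    rw [show dualBlockSum P x c
        = ∑ χ : AddChar G ℂ, if Quotient.mk (dualSetoid P) χ = c then χ x else 0 from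
      finsum_eq_sum_of_fintype _, map_sum]
    refine Finset.sum_congr rfl fun χ _ => ?_
    rw [apply_ite (starRingEnd ℂ), map_zero, AddChar.map_neg_eq_conj]
  calc ∑ c : Quotient (dualSetoid P), BS c m * (starRingEnd ℂ) (dualBlockSum P x c)
      = ∑ c : Quotient (dualSetoid P), ∑ χ : AddChar G ℂ,
          if Quotient.mk (dualSetoid P) χ = c then BS c m * χ (-x) else 0 := by
        simp only [hconj, Finset.mul_sum, mul_ite, mul_zero]
    _ = ∑ χ : AddChar G ℂ, BS (Quotient.mk (dualSetoid P) χ) m * χ (-x) :=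
        sum_fiber (dualSetoid P) fun c χ => BS c m * χ (-x)
    _ = ∑ χ : AddChar G ℂ, blockSum P χ m * χ (-x) := rfl
    _ = ∑ χ : AddChar G ℂ, ∑ g : G, if Quotient.mk P g = m then χ g * χ (-x) else 0 := by
        simp only [blockSum, Finset.sum_mul, ite_mul, zero_mul]
    _ = ∑ g : G, ∑ χ : AddChar G ℂ, if Quotient.mk P g = m then χ g * χ (-x) else 0 :=
        Finset.sum_comm
    _ = ∑ g : G, if Quotient.mk P g = m then ∑ χ : AddChar G ℂ, χ (g + -x) else 0 := by
        refine Finset.sum_congr rfl fun g _ => ?_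
        split_ifs with hg
        · exact Finset.sum_congr rfl fun χ _ => (AddChar.map_add_eq_mul χ g (-x)).symm
        · simp
    _ = ∑ g : G, if Quotient.mk P g = m then (if g + -x = 0 then (Fintype.card G : ℂ) else 0)
          else 0 := by
        simp only [AddChar.sum_apply_eq_ite]
    _ = ∑ g : G, if g = x then (if Quotient.mk P x = m then (Fintype.card G : ℂ) else 0)
          else 0 := by
        refine Finset.sum_congr rfl fun g _ => ?_
        by_cases hg : g = x
        · subst hg; simp
        · have hne : g + -x ≠ 0 := fun hc => hg (by rwa [add_neg_eq_zero] at hc)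
          simp [hg, hne]
    _ = if Quotient.mk P x = m then (Fintype.card G : ℂ) else 0 := by
        rw [Finset.sum_ite_eq' Finset.univ x
          (fun _ => if Quotient.mk P x = m then (Fintype.card G : ℂ) else 0),
          if_pos (Finset.mem_univ x)]

lemma key2 (S : Setoid (AddChar G ℂ)) (χ : AddChar G ℂ) (c : Quotient S) :
    ∑ m : Quotient (coDualSetoid S),
        (Quotient.lift (charSum S) (fun _ _ h => h) m) c
          * (starRingEnd ℂ) (blockSum (coDualSetoid S) χ m)
      = if Quotient.mk S χ = c then (Fintype.card G : ℂ) else 0 := by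
  set T : Setoid G := coDualSetoid S with hT
  set DBS : Quotient T → Quotient S → ℂ :=
    Quotient.lift (charSum S) (fun _ _ h => h) with hDBS
  have hconj : ∀ m, (starRingEnd ℂ) (blockSum T χ m)
      = ∑ g : G, if Quotient.mk T g = m then χ (-g) else 0 := by
    intro m
    rw [blockSum, map_sum]
    refine Finset.sum_congr rfl fun g _ => ?_
    rw [apply_ite (starRingEnd ℂ), map_zero, AddChar.map_neg_eq_conj]
  calc ∑ m : Quotient T, DBS m c * (starRingEnd ℂ) (blockSum T χ m)
      = ∑ m : Quotient T, ∑ g : G,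
          if Quotient.mk T g = m then DBS m c * χ (-g) else 0 := by
        simp only [hconj, Finset.mul_sum, mul_ite, mul_zero]
    _ = ∑ g : G, DBS (Quotient.mk T g) c * χ (-g) :=
        sum_fiber T fun m g => DBS m c * χ (-g)
    _ = ∑ g : G, charSum S g c * χ (-g) := rfl
    _ = ∑ g : G, ∑ ψ : AddChar G ℂ,
          if Quotient.mk S ψ = c then ψ g * χ (-g) else 0 := by
        simp only [charSum_eq, Finset.sum_mul, ite_mul, zero_mul]
    _ = ∑ ψ : AddChar G ℂ, ∑ g : G,
          if Quotient.mk S ψ = c then ψ g * χ (-g) else 0 := Finset.sum_comm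
    _ = ∑ ψ : AddChar G ℂ, if Quotient.mk S ψ = c then ∑ g : G, (ψ - χ) g else 0 := by
        refine Finset.sum_congr rfl fun ψ _ => ?_
        split_ifs with hψ
        · exact Finset.sum_congr rfl fun g _ => (AddChar.sub_apply ψ χ g).symm
        · simp
    _ = ∑ ψ : AddChar G ℂ, if Quotient.mk S ψ = c
          then (if ψ - χ = 0 then (Fintype.card G : ℂ) else 0) else 0 := by
        refine Finset.sum_congr rfl fun ψ _ => ?_
        rw [AddChar.sum_eq_ite]
    _ = ∑ ψ : AddChar G ℂ, if ψ = χ then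
          (if Quotient.mk S χ = c then (Fintype.card G : ℂ) else 0) else 0 := by
        refine Finset.sum_congr rfl fun ψ _ => ?_
        by_cases hψ : ψ = χ
        · subst hψ; simp
        · have hne : ψ - χ ≠ 0 := sub_ne_zero.mpr hψ
          simp [hψ, hne]
    _ = if Quotient.mk S χ = c then (Fintype.card G : ℂ) else 0 := by
        rw [Finset.sum_ite_eq' Finset.univ χ
          (fun _ => if Quotient.mk S χ = c then (Fintype.card G : ℂ) else 0),
          if_pos (Finset.mem_univ χ)]

lemma card_ne_zero' : (Fintype.card G : ℂ) ≠ 0 :=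
  Nat.cast_ne_zero.mpr Fintype.card_ne_zero

lemma coDual_dual_le (P : Setoid G) : coDualSetoid (dualSetoid P) ≤ P := by
  rw [Setoid.le_def]
  intro g h hgh
  have hgh' : dualBlockSum P g = dualBlockSum P h := hgh
  have h1 := key1 P g (Quotient.mk P h)
  have h2 := key1 P h (Quotient.mk P h)
  rw [hgh', h2, if_pos rfl] at h1
  by_cases hc : Quotient.mk P g = Quotient.mk P h
  · exact Quotient.exact hc
  · rw [if_neg hc] at h1
    exact absurd h1 (card_ne_zero' (G := G))

lemma dual_coDual_le (S : Setoid (AddChar G ℂ)) : dualSetoid (coDualSetoid S) ≤ S := by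
  rw [Setoid.le_def]
  intro χ χ' hχ
  have hχ' : blockSum (coDualSetoid S) χ = blockSum (coDualSetoid S) χ' := hχ
  have h1 := key2 S χ (Quotient.mk S χ')
  have h2 := key2 S χ' (Quotient.mk S χ')
  rw [hχ', h2, if_pos rfl] at h1
  by_cases hc : Quotient.mk S χ = Quotient.mk S χ'
  · exact Quotient.exact hc
  · rw [if_neg hc] at h1
    exact absurd h1 (card_ne_zero' (G := G))


/-- If `P` and `Q` are Fourier-reflexive partitions of `G`, then their join `P ⊔ Q` (the
finest partition coarser than both) is Fourier-reflexive, and its dual partition is the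
join of the dual partitions. -/
theorem join_reflexive_and_dual_join (P Q : Setoid G)
    (hP : bidualSetoid P = P) (hQ : bidualSetoid Q = Q) :
    bidualSetoid (P ⊔ Q) = P ⊔ Q ∧ dualSetoid (P ⊔ Q) = dualSetoid P ⊔ dualSetoid Q := by
  have hco : P ⊔ Q ≤ coDualSetoid (dualSetoid P ⊔ dualSetoid Q) := by
    refine sup_le ?_ ?_
    · calc P = coDualSetoid (dualSetoid P) := by rw [← bidual_eq, hP]
        _ ≤ _ := coDual_mono le_sup_left
    · calc Q = coDualSetoid (dualSetoid Q) := by rw [← bidual_eq, hQ]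
        _ ≤ _ := coDual_mono le_sup_right
  have hdual : dualSetoid (P ⊔ Q) = dualSetoid P ⊔ dualSetoid Q := by
    apply le_antisymm
    · exact le_trans (dual_mono hco) (dual_coDual_le _)
    · exact sup_le (dual_mono le_sup_left) (dual_mono le_sup_right)
  refine ⟨le_antisymm ?_ ?_, hdual⟩
  · exact coDual_dual_le (P ⊔ Q)
  · calc P ⊔ Q ≤ coDualSetoid (dualSetoid P ⊔ dualSetoid Q) := hco
      _ = bidualSetoid (P ⊔ Q) := by rw [bidual_eq, hdual]
end

section
/- Let 𝒫 = (P_m)_{m=1}^M be a partition of a finite abelian group G, let 𝒫̂ = (P'_ℓ)_{ℓ=1}^L be its dual partition of Ĝ, and let 𝒫̂̂ = (P''_r)_{r=1}^R be the bidual partition of G. Let K ∈ ℂ^{L×M} be the Krawtchouk matrix of (𝒫, 𝒫̂), i.e., K_{ℓ,m} = Σ_{g∈P_m} χ(g) for any χ ∈ P'_ℓ, and let K' ∈ ℂ^{R×L} be the Krawtchouk matrix of (𝒫̂, 𝒫̂̂), i.e., K'_{r,ℓ} = Σ_{χ∈P'_ℓ} χ(g) for any g ∈ P''_r. Then (K'K)_{r,m}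 = |G| if −P''_r ⊆ P_m, and (K'K)_{r,m} = 0 otherwise. -/
open Finset
open scoped Classical

variable {G : Type*} [AddCommGroup G] [Fintype G]

lemma key (P : Setoid G)
    (K : Quotient (dualSetoid P) → Quotient P → ℂ)
    (hK : ∀ (χ : AddChar G ℂ) (m : Quotient P),
      K (Quotient.mk (dualSetoid P) χ) m = blockSum P χ m)
    (g₀ : G) (m : Quotient P) :
    (∑ᶠ ℓ : Quotient (dualSetoid P), dualBlockSum P g₀ ℓ * K ℓ m) =
      if Quotient.mk P (-g₀) = m then (Fintype.card G : ℂ) else 0 := by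
  rw [finsum_eq_sum_of_fintype]
  have h1 : ∀ ℓ : Quotient (dualSetoid P), dualBlockSum P g₀ ℓ * K ℓ m
      = ∑ χ : AddChar G ℂ, if Quotient.mk (dualSetoid P) χ = ℓ then χ g₀ * K ℓ m else 0 := by
    intro ℓ
    rw [dualBlockSum, finsum_eq_sum_of_fintype, Finset.sum_mul]
    exact Finset.sum_congr rfl fun χ _ => by split <;> simp
  simp_rw [h1]
  rw [Finset.sum_comm]
  have h2 : ∀ χ : AddChar G ℂ,
      (∑ ℓ : Quotient (dualSetoid P),
        if Quotient.mk (dualSetoid P) χ = ℓ then χ g₀ * K ℓ m else 0)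
      = χ g₀ * blockSum P χ m := by
    intro χ
    simp [Finset.sum_ite_eq, hK]
  simp_rw [h2, blockSum, Finset.mul_sum]
  rw [Finset.sum_comm]
  have h3 : ∀ g : G, (∑ χ : AddChar G ℂ, χ g₀ * if Quotient.mk P g = m then χ g else 0)
      = if Quotient.mk P g = m then (if g₀ + g = 0 then (Fintype.card G : ℂ) else 0) else 0 := by
    intro g
    split
    · rw [← AddChar.sum_apply_eq_ite (g₀ + g)]
      exact Finset.sum_congr rfl fun χ _ => by rw [AddChar.map_add_eq_mul]
    · simp
  simp_rw [h3]
  have h4 : ∀ x : G, (if Quotient.mk P x = m then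
      (if g₀ + x = 0 then (Fintype.card G : ℂ) else 0) else 0)
      = if x = -g₀ then (if Quotient.mk P (-g₀) = m then (Fintype.card G : ℂ) else 0) else 0 := by
    intro x
    by_cases hx : x = -g₀
    · subst hx; simp
    · have hx0 : g₀ + x ≠ 0 := fun h => hx (eq_neg_of_add_eq_zero_right h)
      simp [hx, hx0]
  simp_rw [h4]
  rw [Finset.sum_ite_eq' Finset.univ (-g₀)]
  simp

/-- Let `K` be the Krawtchouk matrix of `(P, P̂)` and `K'` the Krawtchouk matrix of
`(P̂, P̂̂)`.  Then `(K'K)_{r,m} = |G|` if `-P''_r ⊆ P_m` and `(K'K)_{r,m} = 0` otherwise. -/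
theorem krawtchouk_product (P : Setoid G)
    (K : Quotient (dualSetoid P) → Quotient P → ℂ)
    (hK : ∀ (χ : AddChar G ℂ) (m : Quotient P),
      K (Quotient.mk (dualSetoid P) χ) m = blockSum P χ m)
    (K' : Quotient (bidualSetoid P) → Quotient (dualSetoid P) → ℂ)
    (hK' : ∀ (g : G) (ℓ : Quotient (dualSetoid P)),
      K' (Quotient.mk (bidualSetoid P) g) ℓ = dualBlockSum P g ℓ)
    (r : Quotient (bidualSetoid P)) (m : Quotient P) :
    (∑ᶠ ℓ : Quotient (dualSetoid P), K' r ℓ * K ℓ m) =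
      if ∀ g : G, Quotient.mk (bidualSetoid P) g = r → Quotient.mk P (-g) = m then
        (Nat.card G : ℂ)
      else 0 := by
  obtain ⟨g₀, rfl⟩ := r.exists_rep
  have hrow : ∀ ℓ, K' (Quotient.mk (bidualSetoid P) g₀) ℓ = dualBlockSum P g₀ ℓ := hK' g₀
  simp_rw [hrow]
  rw [key P K hK g₀ m, Nat.card_eq_fintype_card]
  have hcard : (Fintype.card G : ℂ) ≠ 0 := Nat.cast_ne_zero.mpr Fintype.card_ne_zero
  by_cases h : Quotient.mk P (-g₀) = m
  · rw [if_pos h, if_pos]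
    intro g hg
    have hd : dualBlockSum P g = dualBlockSum P g₀ := Quotient.eq.mp hg
    have e1 := key P K hK g m
    have e2 := key P K hK g₀ m
    rw [hd, e2, if_pos h] at e1
    by_contra hne
    rw [if_neg hne] at e1
    exact hcard e1
  · rw [if_neg h, if_neg]
    exact fun hall => h (hall g₀ rfl)
end

section
/- Let 𝒫 = (P_m)_{m=1}^M be a Fourier-reflexive partition of a finite abelian group G, so that the bidual partition 𝒫̂̂ has the same blocks P_1, …, P_M. Let K ∈ ℂ^{L×M} be the Krawtchouk matrix of (𝒫, 𝒫̂) and K' ∈ ℂ^{M×L} the Krawtchouk matrix of (𝒫̂, 𝒫̂̂ = 𝒫). Then for each block P_r of 𝒫, the set −P_r is again a block of 𝒫, and K'K = |G| · Π, where Π ∈ ℂ^{M×M} is the permutation matrix with Π_{r,m} = 1 exactly when −P_r = P_m; in particular, after suitable reordering of the blocks, K'K = |G| · I_M. -/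
open Finset
open scoped Classical

variable {G : Type*} [AddCommGroup G] [Fintype G]

lemma blockSum_neg (P : Setoid G) (χ : AddChar G ℂ) (c : Quotient P) :
    blockSum P (-χ) c = (starRingEnd ℂ) (blockSum P χ c) := by
  unfold blockSum
  rw [map_sum]
  refine Finset.sum_congr rfl fun g _ => ?_
  by_cases h : Quotient.mk P g = c <;>
    simp [h, AddChar.neg_apply, AddChar.map_neg_eq_conj]

lemma dualSetoid_neg (P : Setoid G) {χ χ' : AddChar G ℂ} (h : (dualSetoid P).r χ χ') :
    (dualSetoid P).r (-χ) (-χ') := by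
  have h' : blockSum P χ = blockSum P χ' := h
  show blockSum P (-χ) = blockSum P (-χ')
  funext c
  rw [blockSum_neg, blockSum_neg, h']

/-- Negation of characters, descended to the dual partition. -/
noncomputable def negDualQ (P : Setoid G) :
    Quotient (dualSetoid P) → Quotient (dualSetoid P) :=
  Quotient.map (fun χ => -χ) fun _ _ h => dualSetoid_neg P h

lemma negDualQ_mk (P : Setoid G) (χ : AddChar G ℂ) :
    negDualQ P (Quotient.mk _ χ) = Quotient.mk _ (-χ) := rfl

lemma mk_neg_eq_negDualQ_iff (P : Setoid G) (χ : AddChar G ℂ) (ℓ : Quotient (dualSetoid P)) :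
    Quotient.mk (dualSetoid P) (-χ) = negDualQ P ℓ ↔ Quotient.mk (dualSetoid P) χ = ℓ := by
  obtain ⟨ψ, rfl⟩ := Quotient.exists_rep ℓ
  rw [negDualQ_mk]
  constructor
  · intro h
    have h2 : (dualSetoid P).r (-χ) (-ψ) := Quotient.exact h
    have h3 := dualSetoid_neg P h2
    rw [neg_neg, neg_neg] at h3
    exact Quotient.sound h3
  · intro h
    exact Quotient.sound (dualSetoid_neg P (Quotient.exact h))

lemma dualBlockSum_neg (P : Setoid G) (g : G) (ℓ : Quotient (dualSetoid P)) :
    dualBlockSum P (-g) ℓ = dualBlockSum P g (negDualQ P ℓ) := by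
  unfold dualBlockSum
  rw [finsum_eq_sum_of_fintype, finsum_eq_sum_of_fintype]
  refine Fintype.sum_equiv (Equiv.neg (AddChar G ℂ)) _ _ fun χ => ?_
  simp only [Equiv.neg_apply, mk_neg_eq_negDualQ_iff, AddChar.neg_apply]

lemma neg_compat (P : Setoid G) (hrefl : bidualSetoid P = P) {a b : G} (h : P.r a b) :
    P.r (-a) (-b) := by
  have h2 : (bidualSetoid P).r a b := by rw [hrefl]; exact h
  have h' : dualBlockSum P a = dualBlockSum P b := h2
  have hgoal : (bidualSetoid P).r (-a) (-b) := by
    show dualBlockSum P (-a) = dualBlockSum P (-b)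
    funext ℓ
    rw [dualBlockSum_neg, dualBlockSum_neg, h']
  rw [hrefl] at hgoal
  exact hgoal

/-- For a Fourier-reflexive partition `P` of `G`, with `K` the Krawtchouk matrix of
`(P, P̂)` and `K'` the Krawtchouk matrix of `(P̂, P̂̂ = P)`:  the negative `-P_r` of every
block of `P` is again a block of `P`, and `K'K = |G| · Π` where `Π` is the permutation
matrix with `Π_{r,m} = 1` exactly when `-P_r = P_m` (so after suitable reordering of the
blocks, `K'K = |G| · I`). -/
theorem reflexive_krawtchouk_orthogonality (P : Setoid G)
    (hrefl : bidualSetoid P = P)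
    (K : Quotient (dualSetoid P) → Quotient P → ℂ)
    (hK : ∀ (χ : AddChar G ℂ) (m : Quotient P),
      K (Quotient.mk (dualSetoid P) χ) m = blockSum P χ m)
    (K' : Quotient P → Quotient (dualSetoid P) → ℂ)
    (hK' : ∀ (g : G) (ℓ : Quotient (dualSetoid P)),
      K' (Quotient.mk P g) ℓ = dualBlockSum P g ℓ) :
    (∀ r : Quotient P, ∃ m : Quotient P,
      {x : G | ∃ g : G, Quotient.mk P g = r ∧ x = -g} = {x : G | Quotient.mk P x = m}) ∧
    (∀ (r m : Quotient P),
      (∑ᶠ ℓ : Quotient (dualSetoid P), K' r ℓ * K ℓ m) =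
        if {x : G | ∃ g : G, Quotient.mk P g = r ∧ x = -g} = {x : G | Quotient.mk P x = m}
        then (Nat.card G : ℂ) else 0) := by
  have hneg : ∀ {a b : G}, P.r a b → P.r (-a) (-b) := fun h => neg_compat P hrefl h
  have hset : ∀ (g : G) (m : Quotient P),
      ({x : G | ∃ g' : G, Quotient.mk P g' = Quotient.mk P g ∧ x = -g'}
          = {x : G | Quotient.mk P x = m})
        ↔ Quotient.mk P (-g) = m := by
    intro g m
    constructor
    · intro h
      have hmem : -g ∈ {x : G | ∃ g' : G, Quotient.mk P g' = Quotient.mk P g ∧ x = -g'} :=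
        ⟨g, rfl, rfl⟩
      rw [h] at hmem
      exact hmem
    · rintro rfl
      ext x
      simp only [Set.mem_setOf_eq]
      constructor
      · rintro ⟨g', hg', rfl⟩
        exact Quotient.sound (hneg (Quotient.exact hg'))
      · intro hx
        refine ⟨-x, ?_, (neg_neg x).symm⟩
        have h2 := hneg (Quotient.exact hx)
        rw [neg_neg] at h2
        exact Quotient.sound h2
  have key : ∀ (g : G) (m : Quotient P),
      (∑ᶠ ℓ : Quotient (dualSetoid P), K' (Quotient.mk P g) ℓ * K ℓ m)
        = if Quotient.mk P (-g) = m then (Nat.card G : ℂ) else 0 := by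
    intro g m
    rw [finsum_eq_sum_of_fintype]
    have step1 : ∀ ℓ : Quotient (dualSetoid P),
        K' (Quotient.mk P g) ℓ * K ℓ m
          = ∑ χ : AddChar G ℂ,
              if Quotient.mk (dualSetoid P) χ = ℓ then χ g * K ℓ m else 0 := by
      intro ℓ
      rw [hK', dualBlockSum, finsum_eq_sum_of_fintype, Finset.sum_mul]
      exact Finset.sum_congr rfl fun χ _ => by split_ifs <;> simp
    simp_rw [step1]
    rw [Finset.sum_comm]
    have step2 : ∀ χ : AddChar G ℂ,
        (∑ ℓ : Quotient (dualSetoid P),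
            if Quotient.mk (dualSetoid P) χ = ℓ then χ g * K ℓ m else 0)
          = ∑ h : G, if Quotient.mk P h = m then χ (g + h) else 0 := by
      intro χ
      rw [Finset.sum_ite_eq, if_pos (Finset.mem_univ _), hK]
      unfold blockSum
      rw [Finset.mul_sum]
      exact Finset.sum_congr rfl fun h _ => by
        split_ifs <;> simp [AddChar.map_add_eq_mul]
    simp_rw [step2]
    rw [Finset.sum_comm]
    have step3 : ∀ h : G,
        (∑ χ : AddChar G ℂ, if Quotient.mk P h = m then χ (g + h) else 0)
          = if Quotient.mk P h = m then
              (if g + h = 0 then (Fintype.card G : ℂ) else 0) else 0 := by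
      intro h
      by_cases h1 : Quotient.mk P h = m
      · simp only [if_pos h1]
        exact AddChar.sum_apply_eq_ite _
      · simp only [if_neg h1, Finset.sum_const_zero]
    simp_rw [step3]
    rw [Finset.sum_eq_single (-g)]
    · simp [Nat.card_eq_fintype_card]
    · intro h _ hne
      have hz : g + h ≠ 0 := fun hc => hne (eq_neg_of_add_eq_zero_right hc)
      simp [hz]
    · intro habs
      exact absurd (Finset.mem_univ _) habs
  refine ⟨?_, ?_⟩
  · intro r
    obtain ⟨g, rfl⟩ := Quotient.exists_rep r
    exact ⟨Quotient.mk P (-g), (hset g _).mpr rfl⟩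
  · intro r m
    obtain ⟨g, rfl⟩ := Quotient.exists_rep r
    rw [key g m]
    by_cases h : Quotient.mk P (-g) = m
    · rw [if_pos h, if_pos ((hset g m).mpr h)]
    · rw [if_neg h, if_neg (fun hc => h ((hset g m).mp hc))]
end

section
/- Let G_1, …, G_n be finite abelian groups and for each i let 𝒫_i be a partition of G_i having the singleton {0} as one of its blocks. Then the dual of the product partition 𝒫_1 × ⋯ × 𝒫_n of G_1 × ⋯ × G_n equals the product of the dual partitions: (𝒫_1 × ⋯ × 𝒫_n)̂ = 𝒫̂_1 × ⋯ × 𝒫̂_n (as partitions of Ĝ_1 × ⋯ × Ĝ_n). Consequently, if every 𝒫_i is Fourier-reflexive, then 𝒫_1 × ⋯ × 𝒫_n is Fourier-reflexive. -/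
open Finset
open scoped Classical

variable {G : Type*} [AddCommGroup G] [Fintype G]

variable {ι : Type*} [Fintype ι] [DecidableEq ι]
  {H : ι → Type*} [∀ i, AddCommGroup (H i)] [∀ i, Fintype (H i)]

/-- The `i`-th component of a character of a product group, under the canonical
identification of the character group of a product with the product of the character
groups. -/
noncomputable def comp1 (χ : AddChar (∀ i, H i) ℂ) (i : ι) : AddChar (H i) ℂ :=
  χ.compAddMonoidHom (AddMonoidHom.single H i)

/-- The product partition `P₁ × ⋯ × Pₙ` of `G₁ × ⋯ × Gₙ`. -/
def prodSetoid (P : ∀ i, Setoid (H i)) : Setoid (∀ i, H i) where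
  r x y := ∀ i, (P i).r (x i) (y i)
  iseqv := ⟨fun x i => (P i).iseqv.refl (x i), fun h i => (P i).iseqv.symm (h i),
    fun h h' i => (P i).iseqv.trans (h i) (h' i)⟩

/-! ### Auxiliary lemmas -/

lemma mk_eq_mk {α : Sort*} {s : Setoid α} {a b : α} :
    Quotient.mk s a = Quotient.mk s b ↔ s.r a b :=
  ⟨Quotient.exact, Quotient.sound⟩

lemma addChar_map_sum {A M κ : Type*} [AddCommMonoid A] [CommMonoid M] (χ : AddChar A M)
    (s : Finset κ) (f : κ → A) : χ (∑ i ∈ s, f i) = ∏ i ∈ s, χ (f i) := by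
  induction s using Finset.cons_induction with
  | empty => simp
  | cons i s hi ih => rw [Finset.sum_cons, Finset.prod_cons, AddChar.map_add_eq_mul, ih]

lemma char_eq_prod (χ : AddChar (∀ i, H i) ℂ) (g : ∀ i, H i) :
    χ g = ∏ i, comp1 χ i (g i) := by
  conv_lhs => rw [← Finset.univ_sum_single g]
  rw [addChar_map_sum]
  rfl

/-- Reassembling a character of the product from its components. -/
noncomputable def piChar (χs : ∀ i, AddChar (H i) ℂ) : AddChar (∀ i, H i) ℂ :=
  ∏ i, (χs i).compAddMonoidHom (Pi.evalAddMonoidHom H i)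

lemma piChar_apply (χs : ∀ i, AddChar (H i) ℂ) (g : ∀ i, H i) :
    piChar χs g = ∏ i, χs i (g i) := by
  simp [piChar, AddChar.prod_apply]

lemma comp1_piChar (χs : ∀ i, AddChar (H i) ℂ) (i : ι) : comp1 (piChar χs) i = χs i := by
  ext x
  show piChar χs (Pi.single i x) = χs i x
  rw [piChar_apply, Fintype.prod_eq_single i]
  · rw [Pi.single_eq_same]
  · intro j hj
    rw [Pi.single_eq_of_ne hj, AddChar.map_zero_eq_one]

lemma piChar_comp1 (χ : AddChar (∀ i, H i) ℂ) : piChar (fun i => comp1 χ i) = χ := by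
  ext g
  rw [piChar_apply, ← char_eq_prod]

/-- The canonical equivalence between tuples of characters and characters of the product. -/
noncomputable def piCharEquiv : (∀ i, AddChar (H i) ℂ) ≃ AddChar (∀ i, H i) ℂ where
  toFun := piChar
  invFun χ i := comp1 χ i
  left_inv χs := funext fun i => comp1_piChar χs i
  right_inv := piChar_comp1

lemma prod_ite_all {p : ι → Prop} [∀ i, Decidable (p i)] (a : ∀ i, ℂ) :
    ∏ i, (if p i then a i else 0) = if ∀ i, p i then ∏ i, a i else 0 := by
  split_ifs with h
  · exact Finset.prod_congr rfl fun i _ => if_pos (h i)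
  · push_neg at h
    obtain ⟨i, hi⟩ := h
    exact Finset.prod_eq_zero (mem_univ i) (if_neg hi)

lemma blockSum_prod (P : ∀ i, Setoid (H i)) (χ : AddChar (∀ i, H i) ℂ) (x : ∀ i, H i) :
    blockSum (prodSetoid P) χ (Quotient.mk (prodSetoid P) x) =
      ∏ i, blockSum (P i) (comp1 χ i) (Quotient.mk (P i) (x i)) := by
  unfold blockSum
  rw [Finset.prod_univ_sum, ← Fintype.piFinset_univ]
  refine Finset.sum_congr rfl fun g _ => ?_
  rw [prod_ite_all]
  have hc : (∀ i, Quotient.mk (P i) (g i) = Quotient.mk (P i) (x i)) ↔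
      Quotient.mk (prodSetoid P) g = Quotient.mk (prodSetoid P) x := by
    simp only [mk_eq_mk]
    exact Iff.rfl
  rw [if_congr hc (char_eq_prod χ g).symm rfl]

lemma blockSum_zero_block {P : Setoid G} (h0 : ∀ g : G, P.r g 0 → g = 0) (χ : AddChar G ℂ) :
    blockSum P χ (Quotient.mk P 0) = 1 := by
  unfold blockSum
  rw [Finset.sum_eq_single 0]
  · simp
  · intro g _ hg
    exact if_neg fun h => hg (h0 g (mk_eq_mk.mp h))
  · simp

lemma dual_r_iff {P : Setoid G} {χ χ' : AddChar G ℂ} :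
    (dualSetoid P).r χ χ' ↔ ∀ c, blockSum P χ c = blockSum P χ' c := by
  constructor
  · exact fun h c => congrFun h c
  · exact funext

lemma sum_blockSum (P : Setoid G) (χ : AddChar G ℂ) :
    ∑ c : Quotient P, blockSum P χ c = ∑ g : G, χ g := by
  unfold blockSum
  rw [Finset.sum_comm]
  refine Finset.sum_congr rfl fun g _ => ?_
  simp

lemma dual_mk_one {P : Setoid G} {χ : AddChar G ℂ} :
    Quotient.mk (dualSetoid P) χ = Quotient.mk (dualSetoid P) 1 ↔ χ = 1 := by
  constructor
  · intro h
    have h' : blockSum P χ = blockSum P (1 : AddChar G ℂ) := Quotient.exact h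
    have hs : ∑ g : G, χ g = ∑ g : G, (1 : AddChar G ℂ) g := by
      rw [← sum_blockSum, ← sum_blockSum, h']
    by_contra hne
    rw [AddChar.sum_eq_zero_iff_ne_zero.mpr hne] at hs
    simp only [AddChar.one_apply, Finset.sum_const, card_univ, nsmul_eq_mul, mul_one] at hs
    exact Fintype.card_ne_zero (by exact_mod_cast hs.symm)
  · rintro rfl; rfl

lemma dualBlockSum_one (P : Setoid G) (g : G) :
    dualBlockSum P g (Quotient.mk (dualSetoid P) 1) = 1 := by
  unfold dualBlockSum
  rw [finsum_eq_sum_of_fintype, Finset.sum_eq_single 1]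
  · simp
  · intro χ _ hχ
    exact if_neg fun h => hχ (dual_mk_one.mp h)
  · simp

theorem dual_prodSetoid_aux (P : ∀ i, Setoid (H i))
    (h0 : ∀ i (g : H i), (P i).r g 0 → g = 0) (χ χ' : AddChar (∀ i, H i) ℂ) :
    (dualSetoid (prodSetoid P)).r χ χ' ↔
      ∀ i, (dualSetoid (P i)).r (comp1 χ i) (comp1 χ' i) := by
  constructor
  · intro h i
    refine dual_r_iff.mpr fun c => ?_
    obtain ⟨x, rfl⟩ := Quotient.exists_rep c
    have e1 : ∀ ψ : AddChar (∀ i, H i) ℂ,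
        blockSum (prodSetoid P) ψ (Quotient.mk (prodSetoid P) (Pi.single i x)) =
          blockSum (P i) (comp1 ψ i) (Quotient.mk (P i) x) := by
      intro ψ
      rw [blockSum_prod, Fintype.prod_eq_single i]
      · rw [Pi.single_eq_same]
      · intro j hj
        rw [Pi.single_eq_of_ne hj]
        exact blockSum_zero_block (h0 j) _
    rw [← e1 χ, ← e1 χ']
    exact dual_r_iff.mp h _
  · intro h
    refine dual_r_iff.mpr fun c => ?_
    obtain ⟨x, rfl⟩ := Quotient.exists_rep c
    rw [blockSum_prod, blockSum_prod]
    exact Finset.prod_congr rfl fun i _ => dual_r_iff.mp (h i) _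

lemma dualBlockSum_prod (P : ∀ i, Setoid (H i))
    (h0 : ∀ i (g : H i), (P i).r g 0 → g = 0) (g : ∀ i, H i)
    (χ₀ : AddChar (∀ i, H i) ℂ) :
    dualBlockSum (prodSetoid P) g (Quotient.mk (dualSetoid (prodSetoid P)) χ₀) =
      ∏ i, dualBlockSum (P i) (g i) (Quotient.mk (dualSetoid (P i)) (comp1 χ₀ i)) := by
  unfold dualBlockSum
  simp_rw [finsum_eq_sum_of_fintype]
  rw [Finset.prod_univ_sum, Fintype.piFinset_univ,
    ← Equiv.sum_comp (piCharEquiv (H := H))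
      (fun χ => if Quotient.mk (dualSetoid (prodSetoid P)) χ = Quotient.mk _ χ₀ then χ g else 0)]
  refine Finset.sum_congr rfl fun χs _ => ?_
  show (if Quotient.mk (dualSetoid (prodSetoid P)) (piChar χs) = Quotient.mk _ χ₀
      then piChar χs g else 0) = _
  rw [prod_ite_all]
  have hc : Quotient.mk (dualSetoid (prodSetoid P)) (piChar χs) =
      Quotient.mk (dualSetoid (prodSetoid P)) χ₀ ↔
      ∀ i, Quotient.mk (dualSetoid (P i)) (χs i) = Quotient.mk (dualSetoid (P i)) (comp1 χ₀ i) := by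
    rw [mk_eq_mk, dual_prodSetoid_aux P h0]
    simp_rw [mk_eq_mk, comp1_piChar]
  rw [if_congr hc (piChar_apply χs g) rfl]

/-- If each partition `P i` of `G i` has `{0}` as a block, then the dual of the product
partition is the product of the dual partitions (under the canonical identification of
the character group of the product with the product of the character groups);
consequently, if every `P i` is Fourier-reflexive, then so is the product partition. -/
theorem dual_prodSetoid (P : ∀ i, Setoid (H i))
    (h0 : ∀ i (g : H i), (P i).r g 0 → g = 0) :
    (∀ χ χ' : AddChar (∀ i, H i) ℂ,
      (dualSetoid (prodSetoid P)).r χ χ' ↔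
        (prodSetoid (fun i => dualSetoid (P i))).r (fun i => comp1 χ i) (fun i => comp1 χ' i)) ∧
    ((∀ i, bidualSetoid (P i) = P i) → bidualSetoid (prodSetoid P) = prodSetoid P) := by
  constructor
  · exact fun χ χ' => dual_prodSetoid_aux P h0 χ χ'
  · intro hbi
    refine Setoid.ext fun g g' => ?_
    constructor
    · intro h i
      have key : ∀ (x : ∀ i, H i) (χ : AddChar (H i) ℂ),
          dualBlockSum (prodSetoid P) x (Quotient.mk (dualSetoid (prodSetoid P))
            (piChar (Function.update (1 : ∀ j, AddChar (H j) ℂ) i χ))) =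
            dualBlockSum (P i) (x i) (Quotient.mk (dualSetoid (P i)) χ) := by
        intro x χ
        rw [dualBlockSum_prod P h0]
        simp only [comp1_piChar]
        rw [Fintype.prod_eq_single i]
        · rw [Function.update_self]
        · intro j hj
          rw [Function.update_of_ne hj, Pi.one_apply]
          exact dualBlockSum_one (P j) (x j)
      have hb : (bidualSetoid (P i)).r (g i) (g' i) := by
        refine funext fun c => ?_
        obtain ⟨χ, rfl⟩ := Quotient.exists_rep c
        rw [← key g χ, ← key g' χ]
        exact congrFun h _
      rwa [hbi i] at hb
    · intro h
      show dualBlockSum (prodSetoid P) g = dualBlockSum (prodSetoid P) g'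
      funext c
      obtain ⟨χ₀, rfl⟩ := Quotient.exists_rep c
      rw [dualBlockSum_prod P h0, dualBlockSum_prod P h0]
      refine Finset.prod_congr rfl fun i _ => ?_
      have hb : (bidualSetoid (P i)).r (g i) (g' i) := by
        rw [hbi i]; exact h i
      exact congrFun hb _
end

section
/- Let R be a finite commutative ring with identity admitting a generating character. Then for every submodule C ⊆ Rⁿ, the cardinalities satisfy |C| · |C^⊥⊥| = |R|ⁿ, where C^⊥⊥ = {v ∈ Rⁿ : v·a = 0 for all a ∈ C} is the dot-product dual. -/
open Finset
open scoped Classical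

variable {R : Type*} [CommRing R] [Fintype R]

/-- `χ` is a generating character of the finite commutative ring `R`:  the map `r ↦ r·χ`
(where `(r·χ)(a) = χ(r·a)`) is an `R`-module isomorphism from `R` to the character module
`R̂` (bijective, additive, and compatible with the scalar multiplications). -/
def IsGeneratingChar (χ : AddChar R ℂ) : Prop :=
  Function.Bijective (fun r : R => χ.mulShift r) ∧
  (∀ r s : R, χ.mulShift (r + s) = χ.mulShift r * χ.mulShift s) ∧
  (∀ r s a : R, χ.mulShift (r * s) a = χ.mulShift s (r * a))

/-- The character `χ_v : a ↦ χ(v·a)` of `(Rⁿ, +)`, where `v·a = Σ_i v_i a_i` is the dot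
product. -/
noncomputable def dotChar {n : ℕ} (χ : AddChar R ℂ) (v : Fin n → R) :
    AddChar (Fin n → R) ℂ :=
  χ.compAddMonoidHom
    { toFun := fun a => ∑ i, v i * a i
      map_zero' := by simp
      map_add' := fun a b => by simp [mul_add, Finset.sum_add_distrib] }

/-- The dot-product dual `S^⊥⊥ = {v ∈ Rⁿ : v·a = 0 for all a ∈ S}` of a set `S ⊆ Rⁿ`. -/
def dotDual {n : ℕ} (S : Set (Fin n → R)) : Set (Fin n → R) :=
  {v : Fin n → R | ∀ a ∈ S, ∑ i, v i * a i = 0}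

/-- If the finite commutative ring `R` admits a generating character, then every
submodule `C ⊆ Rⁿ` satisfies `|C| · |C^⊥⊥| = |R|ⁿ`. -/
theorem card_mul_card_dotDual (n : ℕ) (hex : ∃ χ : AddChar R ℂ, IsGeneratingChar χ)
    (C : Submodule R (Fin n → R)) :
    Nat.card C * Nat.card (dotDual (C : Set (Fin n → R))) = Nat.card R ^ n := by
  classical
  obtain ⟨χ, hbij, -, -⟩ := hex
  have hinj : ∀ b : R, (∀ r : R, χ (b * r) = 1) → b = 0 := by
    intro b hb
    have h0 : χ.mulShift b = χ.mulShift 0 := by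
      ext r
      simp [AddChar.mulShift_apply, hb r]
    exact hbij.1 h0
  -- restriction of dotChar to C
  set ψ : (Fin n → R) → AddChar C ℂ :=
    fun v => (dotChar χ v).compAddMonoidHom C.subtype.toAddMonoidHom with hψ
  have hψapp : ∀ v (a : C), ψ v a = χ (∑ i, v i * (a : Fin n → R) i) := fun v a => rfl
  -- the character a ↦ χ(v ⬝ a) as a character in v
  set φ : (Fin n → R) → AddChar (Fin n → R) ℂ :=
    fun a => χ.compAddMonoidHom
      { toFun := fun v => ∑ i, v i * a i
        map_zero' := by simp
        map_add' := fun v w => by simp [add_mul, Finset.sum_add_distrib] } with hφ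
  have hφapp : ∀ a v, φ a v = χ (∑ i, v i * a i) := fun a v => rfl
  have key1 : ∀ v : Fin n → R, (ψ v = 0) ↔ v ∈ dotDual (C : Set (Fin n → R)) := by
    intro v
    constructor
    · intro h a ha
      refine hinj _ fun r => ?_
      have hra : r • a ∈ C := C.smul_mem r ha
      have := congrArg (fun f : AddChar C ℂ => f ⟨r • a, hra⟩) h
      simp only [hψapp, AddChar.zero_apply] at this
      rw [← this]
      congr 1
      simp [Pi.smul_apply, smul_eq_mul, Finset.sum_mul, Finset.mul_sum]
      ring_nf
      exact Finset.sum_congr rfl fun i _ => by ring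
    · intro hv
      ext a
      rw [hψapp, hv a a.2, AddChar.map_zero_eq_one, AddChar.zero_apply]
  have key2 : ∀ a : Fin n → R, (φ a = 0) ↔ a = 0 := by
    intro a
    constructor
    · intro h
      funext i
      refine hinj _ fun r => ?_
      have := congrArg (fun f : AddChar (Fin n → R) ℂ => f (Pi.single i r)) h
      simp only [hφapp, AddChar.zero_apply] at this
      rw [← this]
      congr 1
      rw [Finset.sum_eq_single i]
      · simp [mul_comm]
      · intro j _ hj; simp [Pi.single_eq_of_ne hj]
      · simp
    · rintro rfl
      ext v
      simp [hφapp]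
  -- double counting
  have hswap : ∑ v : Fin n → R, ∑ a : C, (ψ v) a = ∑ a : C, ∑ v : Fin n → R, (φ a) v := by
    rw [Finset.sum_comm]
    rfl
  have lhs_eq : ∑ v : Fin n → R, ∑ a : C, (ψ v) a
      = (Nat.card (dotDual (C : Set (Fin n → R))) : ℂ) * (Nat.card C : ℂ) := by
    have : ∀ v : Fin n → R, ∑ a : C, (ψ v) a
        = if v ∈ dotDual (C : Set (Fin n → R)) then (Fintype.card C : ℂ) else 0 := by
      intro v
      rw [AddChar.sum_eq_ite (ψ v)]
      simp [key1 v]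
    simp_rw [this]
    rw [← Finset.sum_filter, Finset.sum_const, nsmul_eq_mul]
    rw [Nat.card_eq_fintype_card (α := ↥(dotDual (C : Set (Fin n → R)))),
      Nat.card_eq_fintype_card (α := ↥C)]
    congr 1
    rw [Fintype.card_subtype]
  have rhs_eq : ∑ a : C, ∑ v : Fin n → R, (φ a) v = (Fintype.card (Fin n → R) : ℂ) := by
    have : ∀ a : C, ∑ v : Fin n → R, φ (a : Fin n → R) v
        = if (a : Fin n → R) = 0 then (Fintype.card (Fin n → R) : ℂ) else 0 := by
      intro a
      rw [AddChar.sum_eq_ite (φ a)]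
      simp [key2 (a : Fin n → R)]
    simp_rw [this]
    rw [Fintype.sum_eq_single (0 : C)]
    · simp
    · intro b hb
      rw [if_neg]
      simpa using hb
  have final : (Nat.card (dotDual (C : Set (Fin n → R))) : ℂ) * (Nat.card C : ℂ)
      = ((Nat.card R : ℕ) ^ n : ℕ) := by
    rw [← lhs_eq, hswap, rhs_eq]
    push_cast
    rw [Fintype.card_pi]
    simp [Nat.card_eq_fintype_card]
  rw [← Nat.cast_inj (R := ℂ)]
  push_cast at final ⊢
  linear_combination final
end
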